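/- A graded sequence with matrix $A\in L$ is $W$-Appell if and only if $A = \alpha(M_W)$ for some power series $\alpha\in\mathbb{F}[[y]]$ of valuation 0 substituted at the matrix $M_W$, where $M_W$ is the matrix with $(n,n-1)$-entry $w_n/w_{n-1}$ and zeros elsewhere; moreover the substituted series $\alpha$ is exactly the $\alpha$-parameter $\sum_l a_{l,0}y^l/w_l$ of $A$. -/

import Mathlib

open Polynomial

def matMul {F : Type*} [Field F] (A B : ℕ → ℕ → F) : ℕ → ℕ → F :=
  fun n l => ∑ k ∈ Finset.range (n + 1), A n k * B k l

def idMat {F : Type*} [Field F] : ℕ → ℕ → F :=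
  fun n k => if n = k then 1 else 0

/-- The matrix `M_W` representing the weighted derivative `D_W` in the
monomial basis: `(M_W)_{n,n-1} = wₙ/wₙ₋₁` and zeros elsewhere. -/
noncomputable def Mw {F : Type*} [Field F] (w : ℕ → F) : ℕ → ℕ → F :=
  fun n k => if k + 1 = n then w n / w (n - 1) else 0

/-- Powers of `M_W`. -/
noncomputable def Mpow {F : Type*} [Field F] (w : ℕ → F) : ℕ → ℕ → ℕ → F
  | 0 => idMat
  | r + 1 => matMul (Mw w) (Mpow w r)

section Aux
variable {F : Type*} [Field F]

lemma Mpow_eq (w : ℕ → F) (hw : ∀ n, w n ≠ 0) (r : ℕ) :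
    ∀ n k, Mpow w r n k = if k + r = n then w n / w k else 0 := by
  induction r with
  | zero =>
    intro n k
    simp only [Mpow, idMat, Nat.add_zero]
    by_cases h : n = k
    · subst h; simp [div_self (hw n)]
    · simp [h, Ne.symm h]
  | succ r ih =>
    intro n k
    match n with
    | 0 =>
      simp only [Mpow, matMul]
      rw [Finset.sum_eq_zero, if_neg (by omega)]
      intro j hj
      simp [Mw]
    | m + 1 =>
      simp only [Mpow, matMul]
      rw [Finset.sum_eq_single m]
      · rw [ih]
        simp only [Mw, Nat.add_sub_cancel]
        rw [if_true]
        by_cases h : k + r = m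
        · rw [if_pos h, if_pos (show k + (r + 1) = m + 1 by omega), div_mul_div_comm,
            mul_comm (w m) (w k), mul_div_mul_right _ _ (hw m)]
        · rw [if_neg h, if_neg (show ¬ k + (r + 1) = m + 1 by omega), mul_zero]
      · intro j hj hjm
        have : ¬ (j + 1 = m + 1) := by omega
        simp [Mw, this, hjm]
      · intro h
        exact absurd (Finset.mem_range.mpr (by omega)) h

lemma sum_mpow (w : ℕ → F) (hw : ∀ n, w n ≠ 0) (c : ℕ → F) (n k : ℕ) :
    ∑ r ∈ Finset.range (n + 1), c r * Mpow w r n k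
      = if k ≤ n then c (n - k) * (w n / w k) else 0 := by
  by_cases hk : k ≤ n
  · rw [if_pos hk, Finset.sum_eq_single (n - k)]
    · rw [Mpow_eq w hw, if_pos (by omega)]
    · intro r hr hrn
      simp only [Finset.mem_range] at hr
      rw [Mpow_eq w hw, if_neg (by omega), mul_zero]
    · intro h
      exact absurd (Finset.mem_range.mpr (by omega)) h
  · rw [if_neg hk, Finset.sum_eq_zero]
    intro r hr
    rw [Mpow_eq w hw, if_neg (by omega), mul_zero]

lemma Dcoeff (w : ℕ → F) (D : F[X] →ₗ[F] F[X]) (hD0 : D 1 = 0)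
    (hD : ∀ n : ℕ, D (X ^ (n + 1)) = (w (n + 1) / w n) • (X : F[X]) ^ n)
    (q : F[X]) (k : ℕ) :
    (D q).coeff k = (w (k + 1) / w k) * q.coeff (k + 1) := by
  induction q using Polynomial.induction_on' with
  | add u v hu hv => simp [map_add, hu, hv, mul_add]
  | monomial i a =>
    have h1 : (monomial i a : F[X]) = a • X ^ i := by
      rw [smul_eq_C_mul, C_mul_X_pow_eq_monomial]
    rw [h1, map_smul]
    match i with
    | 0 =>
      rw [pow_zero, hD0, smul_zero, coeff_zero, coeff_smul, smul_eq_mul, coeff_one,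
        if_neg (Nat.succ_ne_zero k), mul_zero, mul_zero]
    | i + 1 =>
      rw [hD i]
      simp only [coeff_smul, smul_eq_mul, coeff_X_pow]
      by_cases h : k = i
      · subst h; rw [if_pos rfl, if_pos rfl]; ring
      · rw [if_neg h, if_neg (by omega)]; ring

lemma span_p (p : ℕ → F[X]) (hp : ∀ n, (p n).degree = n) (q : F[X]) :
    q ∈ Submodule.span F (Set.range p) := by
  have key : ∀ N, ∀ q : F[X], q.natDegree ≤ N → q ∈ Submodule.span F (Set.range p) := by
    intro N
    induction N with
    | zero =>
      intro q hq
      have hc : (p 0).coeff 0 ≠ 0 := coeff_ne_zero_of_eq_degree (hp 0)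
      have h2 : p 0 = C ((p 0).coeff 0) :=
        eq_C_of_degree_le_zero (le_of_eq (by exact_mod_cast hp 0))
      have hq0 : q = (q.coeff 0 / (p 0).coeff 0) • p 0 := by
        nth_rewrite 2 [h2]
        rw [smul_C, smul_eq_mul, div_mul_cancel₀ _ hc]
        exact eq_C_of_natDegree_le_zero hq
      rw [hq0]
      exact Submodule.smul_mem _ _ (Submodule.subset_span ⟨0, rfl⟩)
    | succ N ih =>
      intro q hq
      set c := q.coeff (N + 1) / (p (N + 1)).coeff (N + 1) with hc
      have hpc : (p (N + 1)).coeff (N + 1) ≠ 0 := coeff_ne_zero_of_eq_degree (hp (N + 1))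
      have hr : (q - c • p (N + 1)).natDegree ≤ N := by
        rw [natDegree_le_iff_coeff_eq_zero]
        intro m hm
        rw [coeff_sub, coeff_smul, smul_eq_mul]
        rcases eq_or_lt_of_le (Nat.succ_le_of_lt hm) with h | h
        · rw [← h, hc, div_mul_cancel₀ _ hpc, sub_self]
        · rw [coeff_eq_zero_of_natDegree_lt (lt_of_le_of_lt hq h),
            coeff_eq_zero_of_degree_lt (by rw [hp (N+1)]; exact_mod_cast h), mul_zero, sub_zero]
      have hsplit : q = (q - c • p (N + 1)) + c • p (N + 1) := by ring
      rw [hsplit]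
      exact Submodule.add_mem _ (ih _ hr)
        (Submodule.smul_mem _ _ (Submodule.subset_span ⟨N + 1, rfl⟩))
  exact key q.natDegree q le_rfl

lemma formula_aux (w : ℕ → F) (hw0 : w 0 = 1) (hw : ∀ n, w n ≠ 0) (a : ℕ → ℕ → F)
    (rel : ∀ n k, w (k + 1) / w k * a (n + 1) (k + 1) = w (n + 1) / w n * a n k) :
    ∀ k n, k ≤ n → a n k = a (n - k) 0 / w (n - k) * (w n / w k) := by
  intro k
  induction k with
  | zero =>
    intro n _
    rw [Nat.sub_zero, hw0, div_one, div_mul_cancel₀ _ (hw n)]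
  | succ k ih =>
    intro n hn
    obtain ⟨m, rfl⟩ : ∃ m, n = m + 1 := ⟨n - 1, by omega⟩
    have hk : k ≤ m := by omega
    have h1 := rel m k
    rw [ih m hk] at h1
    have hne : w (k + 1) / w k ≠ 0 := div_ne_zero (hw _) (hw _)
    have hsub : m + 1 - (k + 1) = m - k := by omega
    rw [hsub]
    apply mul_left_cancel₀ hne
    rw [h1]
    field_simp [hw k, hw (k + 1), hw m, hw (m + 1), hw (m - k)]
end Aux

/-- A graded sequence with matrix `A` is `W`-Appell iff `A = α(M_W)` for a
power series `α` of valuation `0` substituted at `M_W` (the `(n,k)`-entry of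
`α(M_W)` being `∑ᵣ (coeff r α) (M_W^r)_{n,k}`, a finite sum); moreover `α` is
then exactly the `α`-parameter `∑ₗ a_{l,0} yˡ/wₗ` of `A`. -/
theorem stmt16 {F : Type*} [Field F] (w : ℕ → F) (hw0 : w 0 = 1)
    (hw : ∀ n, w n ≠ 0)
    (p : ℕ → F[X]) (hp : ∀ n, (p n).degree = n)
    (Q : F[X] →ₗ[F] F[X]) (hQ0 : Q (p 0) = 0)
    (hQ : ∀ n : ℕ, Q (p (n + 1)) = (w (n + 1) / w n) • p n)
    -- the weighted derivative `D_W`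
    (D : F[X] →ₗ[F] F[X]) (hD0 : D 1 = 0)
    (hD : ∀ n : ℕ, D (X ^ (n + 1)) = (w (n + 1) / w n) • (X : F[X]) ^ n) :
    -- `W`-Appell (`Q = D_W`) iff `A = α(M_W)` with `v(α) = 0`
    ((Q = D) ↔
      ∃ α : PowerSeries F, PowerSeries.constantCoeff α ≠ 0 ∧
        ∀ n k : ℕ, (p n).coeff k =
          ∑ r ∈ Finset.range (n + 1), PowerSeries.coeff r α * Mpow w r n k) ∧
    -- and then the series is the `α`-parameter `∑ₗ a_{l,0} yˡ/wₗ`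
    ((Q = D) →
      ∀ n k : ℕ, (p n).coeff k =
        ∑ r ∈ Finset.range (n + 1), ((p r).coeff 0 / w r) * Mpow w r n k) := by
  -- coefficients vanish above the degree
  have hzero : ∀ n k : ℕ, n < k → (p n).coeff k = 0 := by
    intro n k hk
    exact coeff_eq_zero_of_degree_lt (by rw [hp n]; exact_mod_cast hk)
  -- if `Q = D`, the coefficient matrix has the claimed form
  have aform : Q = D → ∀ n k : ℕ,
      (p n).coeff k = if k ≤ n then (p (n - k)).coeff 0 / w (n - k) * (w n / w k) else 0 := by
    intro h
    have rel : ∀ n k, w (k + 1) / w k * (p (n + 1)).coeff (k + 1)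
        = w (n + 1) / w n * (p n).coeff k := by
      intro n k
      have h1 : D (p (n + 1)) = (w (n + 1) / w n) • p n := by rw [← h]; exact hQ n
      have h2 := congrArg (fun q : F[X] => q.coeff k) h1
      simpa [Dcoeff w D hD0 hD, coeff_smul, smul_eq_mul] using h2
    intro n k
    by_cases hk : k ≤ n
    · rw [if_pos hk]
      exact formula_aux w hw0 hw (fun n k => (p n).coeff k) rel k n hk
    · rw [if_neg hk]
      exact hzero n k (by omega)
  refine ⟨⟨?_, ?_⟩, ?_⟩
  · -- forward direction of the iff
    intro h
    refine ⟨PowerSeries.mk (fun l => (p l).coeff 0 / w l), ?_, ?_⟩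
    · have h0 : (p 0).coeff 0 ≠ 0 := coeff_ne_zero_of_eq_degree (hp 0)
      simpa [hw0] using h0
    · intro n k
      rw [sum_mpow w hw, aform h n k]
      simp
  · -- reverse direction of the iff
    rintro ⟨α, hα0, hform⟩
    have hcoeff : ∀ n k : ℕ, (p n).coeff k =
        if k ≤ n then PowerSeries.coeff (n - k) α * (w n / w k) else 0 := by
      intro n k
      rw [hform n k, sum_mpow w hw]
    have hag : ∀ n, Q (p n) = D (p n) := by
      intro n
      match n with
      | 0 =>
        rw [hQ0]
        symm
        ext k
        rw [Dcoeff w D hD0 hD, hzero 0 (k + 1) (by omega), mul_zero, coeff_zero]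
      | n + 1 =>
        rw [hQ n]
        symm
        ext k
        rw [Dcoeff w D hD0 hD, coeff_smul, smul_eq_mul, hcoeff (n + 1) (k + 1), hcoeff n k]
        by_cases hk : k ≤ n
        · rw [if_pos hk, if_pos (by omega), Nat.succ_sub_succ]
          field_simp [hw k, hw (k + 1), hw n, hw (n + 1)]
        · rw [if_neg hk, if_neg (by omega), mul_zero, mul_zero]
    apply LinearMap.ext
    intro q
    have hs := span_p p hp q
    refine Submodule.span_induction ?_ ?_ ?_ ?_ hs
    · rintro x ⟨n, rfl⟩
      exact hag n
    · simp
    · intro x y _ _ hx hy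
      simp [map_add, hx, hy]
    · intro c x _ hx
      simp [map_smul, hx]
  · -- the series is the α-parameter
    intro h n k
    rw [sum_mpow w hw, aform h n k]
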